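/- In every execution of the online collaborative caching algorithm on a request multiset V, the total caching cost paid by the algorithm is at most the total credit of the requests: Σ_{w∈W, w≠r} f_w ≤ Σ_{v∈V} ĉ(v), where W is the final cache set and for each request v the credit ĉ(v) equals f_w − p(w) + d(w,v) if v caused the content to be cached at a new node w (with p the potentials just before v arrived), and ĉ(v) = d(W_v, v) otherwise, W_v being the cache set when v was processed. -/

import Mathlib

open Finset

/-- The setting of the online collaborative caching problem: a finite set `X` of nodes
(base stations together with the root `r` representing the Internet), a pseudometric
UA-cost `d` satisfying the triangle inequality, and nonnegative caching costs `f`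
with `f r = 0` (the root always holds the content). -/
structure CachingSetting (X : Type*) [Fintype X] where
  d : X → X → ℝ
  f : X → ℝ
  r : X
  d_nonneg : ∀ x y, 0 ≤ d x y
  d_self : ∀ x, d x x = 0
  d_symm : ∀ x y, d x y = d y x
  d_triangle : ∀ x y z, d x z ≤ d x y + d y z
  f_nonneg : ∀ k, 0 ≤ f k
  f_root : f r = 0

namespace CachingSetting

variable {X : Type*} [Fintype X] [DecidableEq X] (S : CachingSetting X)

/-- UA cost of serving a request at `v` from the nearest node of the cache set `W`:
`D W v = min_{k ∈ W} d k v`. -/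
noncomputable def D (W : Finset X) (v : X) : ℝ :=
  if h : W.Nonempty then W.inf' h (fun k => S.d k v) else 0

/-- Potential of node `k` with respect to the cache set `W` and the first `j`
requests of the request sequence `v`:
`pot v W j k = ∑_{i < j} max(D W (v i) − d k (v i), 0)`. -/
noncomputable def pot (v : ℕ → X) (W : Finset X) (j : ℕ) (k : X) : ℝ :=
  ∑ i ∈ Finset.range j, max (S.D W (v i) - S.d k (v i)) 0

/-- One step of the online algorithm on request `v i`, turning the cache set `W`
into `W'`.  After updating the potentials (they become the potentials with respect
to `W` and the first `i + 1` requests), either all potentials are at most the caching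
costs and no new cache is opened, or the content is cached at a maximizer `w` of
`p(k) − f k` with `p(w) − f w > 0`. -/
def Step (v : ℕ → X) (i : ℕ) (W W' : Finset X) : Prop :=
  ((∀ k, S.pot v W (i + 1) k ≤ S.f k) ∧ W' = W) ∨
    (∃ w, (∀ k, S.pot v W (i + 1) k - S.f k ≤ S.pot v W (i + 1) w - S.f w) ∧
      S.f w < S.pot v W (i + 1) w ∧ W' = insert w W)

/-- `IsExecution S n v Ws` says that `Ws j` is the cache set maintained by the online
algorithm after fully processing the first `j` of the `n` requests `v 0, v 1, …`
(initially the cache set is `{r}`); ties may be broken arbitrarily. -/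
def IsExecution (n : ℕ) (v : ℕ → X) (Ws : ℕ → Finset X) : Prop :=
  Ws 0 = {S.r} ∧ ∀ i < n, S.Step v i (Ws i) (Ws (i + 1))

/-- One step of the online algorithm on request `v i`, together with the credit `c`
assigned to the request: `c = f w − p(w) + d(w, v i)` if the request causes the
content to be cached at a new node `w` (with `p` the potentials just before the
request arrived), and `c = d(W, v i)` otherwise (`W` then being the cache set when
the request is processed). -/
def StepWithCredit (v : ℕ → X) (i : ℕ) (W W' : Finset X) (c : ℝ) : Prop :=
  ((∀ k, S.pot v W (i + 1) k ≤ S.f k) ∧ W' = W ∧ c = S.D W (v i)) ∨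
    (∃ w, (∀ k, S.pot v W (i + 1) k - S.f k ≤ S.pot v W (i + 1) w - S.f w) ∧
      S.f w < S.pot v W (i + 1) w ∧ W' = insert w W ∧
      c = S.f w - S.pot v W i w + S.d w (v i))

/-- `IsExecutionWithCredits S n v Ws c` says that `Ws j` is the cache set maintained
by the online algorithm after fully processing the first `j` of the `n` requests
`v 0, v 1, …` (initially `{r}`), and `c i` is the credit of request `v i`; ties may
be broken arbitrarily. -/
def IsExecutionWithCredits (n : ℕ) (v : ℕ → X) (Ws : ℕ → Finset X) (c : ℕ → ℝ) : Prop :=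
  Ws 0 = {S.r} ∧ ∀ i < n, S.StepWithCredit v i (Ws i) (Ws (i + 1)) (c i)

end CachingSetting

section Aux

variable {X : Type*} [Fintype X] [DecidableEq X]

lemma mylemma_D_nonneg (S : CachingSetting X) (W : Finset X) (u : X) : 0 ≤ S.D W u := by
  unfold CachingSetting.D
  split
  · exact Finset.le_inf' _ _ fun b _ => S.d_nonneg b u
  · exact le_rfl

lemma mylemma_D_le (S : CachingSetting X) {W : Finset X} {k : X} (hk : k ∈ W) (u : X) :
    S.D W u ≤ S.d k u := by
  unfold CachingSetting.D
  rw [dif_pos ⟨k, hk⟩]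
  exact Finset.inf'_le _ hk

lemma mylemma_D_insert (S : CachingSetting X) {W : Finset X} (hW : W.Nonempty) (w u : X) :
    S.D (insert w W) u = min (S.d w u) (S.D W u) := by
  unfold CachingSetting.D
  rw [dif_pos (Finset.insert_nonempty w W), dif_pos hW, Finset.inf'_insert]

lemma mylemma_pot_succ (S : CachingSetting X) (v : ℕ → X) (W : Finset X) (j : ℕ) (k : X) :
    S.pot v W (j + 1) k = S.pot v W j k + max (S.D W (v j) - S.d k (v j)) 0 :=
  Finset.sum_range_succ _ _

/-- The total potential of a "greedy chain" of prospective caches. -/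
noncomputable def mychain (S : CachingSetting X) (v : ℕ → X) (j : ℕ) :
    Finset X → List X → ℝ
  | _, [] => 0
  | W, k :: L => S.pot v W j k + mychain S v j (insert k W) L

lemma mychain_zero (S : CachingSetting X) (v : ℕ → X) :
    ∀ (L : List X) (W : Finset X), mychain S v 0 W L = 0 := by
  intro L
  induction L with
  | nil => intro W; rfl
  | cons k L ih => intro W; simp [mychain, CachingSetting.pot, ih]

lemma mychain_succ_le (S : CachingSetting X) (v : ℕ → X) (j : ℕ) :
    ∀ (L : List X) (W : Finset X), W.Nonempty →
      mychain S v (j + 1) W L ≤ mychain S v j W L + S.D W (v j) := by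
  intro L
  induction L with
  | nil =>
    intro W hW
    simpa [mychain] using mylemma_D_nonneg S W (v j)
  | cons k L ih =>
    intro W hW
    have h1 := ih (insert k W) (Finset.insert_nonempty k W)
    have hpot := mylemma_pot_succ S v W j k
    have hD := mylemma_D_insert S hW k (v j)
    have hkey : max (S.D W (v j) - S.d k (v j)) 0 + S.D (insert k W) (v j) ≤ S.D W (v j) := by
      rw [hD]
      rcases le_total (S.D W (v j)) (S.d k (v j)) with h | h
      · rw [max_eq_right (by linarith), min_eq_right h]; linarith
      · rw [max_eq_left (by linarith), min_eq_left h]; linarith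
    simp only [mychain]
    rw [hpot]
    linarith

end Aux

/-- Lemma 4 of the paper: in every execution of the online algorithm on requests
`v 0, …, v (n-1)` with credits `c`, the total caching cost paid by the algorithm is
at most the total credit of the requests:
`∑_{w ∈ W, w ≠ r} f w ≤ ∑_{v ∈ V} ĉ(v)`, where `W = Ws n` is the final cache set. -/


theorem caching_cost_le_credit {X : Type*} [Fintype X] [DecidableEq X]
    (S : CachingSetting X) (n : ℕ) (v : ℕ → X) (Ws : ℕ → Finset X) (c : ℕ → ℝ)
    (hexec : S.IsExecutionWithCredits n v Ws c) :
    ∑ w ∈ (Ws n).erase S.r, S.f w ≤ ∑ i ∈ Finset.range n, c i := by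
  obtain ⟨h0, hstep⟩ := hexec
  have hroot : ∀ j, j ≤ n → S.r ∈ Ws j := by
    intro j
    induction j with
    | zero => intro _; rw [h0]; exact Finset.mem_singleton_self _
    | succ j ih =>
      intro hj
      have hj' : j < n := Nat.lt_of_succ_le hj
      rcases hstep j hj' with ⟨_, hW, _⟩ | ⟨w, _, _, hW, _⟩
      · rw [hW]; exact ih hj'.le
      · rw [hW]; exact Finset.mem_insert_of_mem (ih hj'.le)
  have key : ∀ j, j ≤ n → ∀ L : List X,
      mychain S v j (Ws j) L ≤ ∑ i ∈ Finset.range j, c i - ∑ k ∈ (Ws j).erase S.r, S.f k := by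
    intro j
    induction j with
    | zero =>
      intro _ L
      simp [h0, mychain_zero, Finset.erase_singleton]
    | succ j ih =>
      intro hj L
      have hj' : j < n := Nat.lt_of_succ_le hj
      have hne : (Ws j).Nonempty := ⟨S.r, hroot j hj'.le⟩
      rcases hstep j hj' with ⟨_, hW, hc⟩ | ⟨w, _, _, hW, hc⟩
      · -- no caching
        have h1 := mychain_succ_le S v j L (Ws j) hne
        have h2 := ih hj'.le L
        rw [hW, Finset.sum_range_succ]
        linarith
      · -- caching at w
        have h1 := mychain_succ_le S v j L (insert w (Ws j)) (Finset.insert_nonempty w (Ws j))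
        have h2 : S.D (insert w (Ws j)) (v j) ≤ S.d w (v j) :=
          mylemma_D_le S (Finset.mem_insert_self w (Ws j)) (v j)
        have h3 := ih hj'.le (w :: L)
        simp only [mychain] at h3
        have h4 : ∑ k ∈ (insert w (Ws j)).erase S.r, S.f k ≤
            S.f w + ∑ k ∈ (Ws j).erase S.r, S.f k := by
          have hsub : (insert w (Ws j)).erase S.r ⊆ insert w ((Ws j).erase S.r) := by
            intro x hx
            rw [Finset.mem_erase, Finset.mem_insert] at hx
            rcases hx.2 with h | h
            · rw [h]; exact Finset.mem_insert_self _ _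
            · exact Finset.mem_insert_of_mem (Finset.mem_erase.mpr ⟨hx.1, h⟩)
          calc ∑ k ∈ (insert w (Ws j)).erase S.r, S.f k
              ≤ ∑ k ∈ insert w ((Ws j).erase S.r), S.f k :=
                Finset.sum_le_sum_of_subset_of_nonneg hsub (fun k _ _ => S.f_nonneg k)
            _ ≤ S.f w + ∑ k ∈ (Ws j).erase S.r, S.f k := by
                by_cases hw : w ∈ (Ws j).erase S.r
                · rw [Finset.insert_eq_self.mpr hw]; linarith [S.f_nonneg w]
                · rw [Finset.sum_insert hw]
        rw [hW, Finset.sum_range_succ]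
        linarith
  have h := key n le_rfl []
  simp only [mychain] at h
  linarith
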